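/- Let V be a vector space over a field K. For every cardinal λ ≤ Module.rank K V there exists a family 𝓕 ⊆ V with HL(𝓕) = L(𝓕) = Order.succ λ (the cardinal successor of λ). In particular, every successor cardinal κ ≤ (dim V)⁺ is attained as a common value of the homogeneous lineability number and the lineability number of some subset of V. -/

import Mathlib

open Cardinal

/-- The lineability number of `𝓕 ⊆ V`: the least cardinal `l` such that `𝓕 ∪ {0}` contains
no `K`-linear subspace of dimension `l`. -/
noncomputable def lineabilityNumber (K V : Type u) [Field K] [AddCommGroup V] [Module K V]
    (𝓕 : Set V) : Cardinal.{u} :=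
  sInf {l : Cardinal.{u} |
    ¬ ∃ W : Submodule K V, (W : Set V) ⊆ 𝓕 ∪ {0} ∧ Module.rank K W = l}

/-- The homogeneous lineability number of `𝓕 ⊆ V`: the least cardinal `l` for which some
subspace `Y ⊆ 𝓕 ∪ {0}` of dimension `< l` cannot be extended to a subspace `X ⊆ 𝓕 ∪ {0}`
of dimension `l`. -/
noncomputable def homLineabilityNumber (K V : Type u) [Field K] [AddCommGroup V] [Module K V]
    (𝓕 : Set V) : Cardinal.{u} :=
  sInf {l : Cardinal.{u} |
    ∃ Y : Submodule K V, (Y : Set V) ⊆ 𝓕 ∪ {0} ∧ Module.rank K Y < l ∧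
      ¬ ∃ X : Submodule K V, Y ≤ X ∧ (X : Set V) ⊆ 𝓕 ∪ {0} ∧ Module.rank K X = l}

/-- **Proposition (ii).** For every cardinal `λ ≤ dim V` there is a family `𝓕 ⊆ V` with
`HL(𝓕) = L(𝓕) = λ⁺` (the cardinal successor of `λ`); thus every successor cardinal
`≤ (dim V)⁺` is attained as a common value of both numbers. -/

lemma clemma {a c d : Cardinal.{u}} (hac : a ≤ c) (hcd : c ≤ a + d) :
    ∃ e ≤ d, a + e = c := by
  rcases eq_or_lt_of_le hac with rfl | hlt
  · exact ⟨0, (zero_le : (0 : Cardinal.{u}) ≤ d), add_zero a⟩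
  by_cases hc : ℵ₀ ≤ c
  · refine ⟨c, ?_, add_eq_right hc hac⟩
    by_contra h
    push_neg at h
    exact absurd hcd (not_le.2 (Cardinal.add_lt_of_lt hc hlt h))
  · push_neg at hc
    obtain ⟨n, rfl⟩ := Cardinal.lt_aleph0.1 hc
    obtain ⟨m, rfl⟩ := Cardinal.lt_aleph0.1 (hac.trans_lt hc)
    have hmn : m < n := by exact_mod_cast hlt
    refine ⟨(n - m : ℕ), ?_, ?_⟩
    · by_contra h
      push_neg at h
      obtain ⟨k, rfl⟩ := Cardinal.lt_aleph0.1 (h.trans (nat_lt_aleph0 _))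
      rw [Nat.cast_lt] at h
      rw [← Nat.cast_add, Nat.cast_le] at hcd
      omega
    · rw [← Nat.cast_add, Nat.cast_inj]
      omega

lemma exists_submodule_rank_eq' (K M : Type u) [Field K] [AddCommGroup M] [Module K M]
    {c : Cardinal.{u}} (hc : c ≤ Module.rank K M) :
    ∃ Z : Submodule K M, Module.rank K Z = c := by
  obtain ⟨s, hs, hsli⟩ := le_rank_iff_exists_linearIndependent.1 hc
  exact ⟨Submodule.span K s, by rw [rank_span_set hsli, hs]⟩

lemma rank_map_subtype {K M : Type u} [Field K] [AddCommGroup M] [Module K M]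
    (Z : Submodule K M) (p : Submodule K Z) :
    Module.rank K (p.map Z.subtype) = Module.rank K p :=
  ((Submodule.equivMapOfInjective Z.subtype Z.injective_subtype p).rank_eq).symm

lemma ext_lemma {K M : Type u} [Field K] [AddCommGroup M] [Module K M]
    (Y : Submodule K M) {c : Cardinal.{u}} (hYc : Module.rank K Y ≤ c)
    (hc : c ≤ Module.rank K M) :
    ∃ X : Submodule K M, Y ≤ X ∧ Module.rank K X = c := by
  obtain ⟨Z, hZ⟩ := Submodule.exists_isCompl Y
  have hrank : Module.rank K Y + Module.rank K Z = Module.rank K M := by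
    have := Submodule.rank_sup_add_rank_inf_eq Y Z
    rwa [hZ.sup_eq_top, hZ.inf_eq_bot, rank_top, rank_bot, add_zero, eq_comm] at this
  obtain ⟨e, hed, hae⟩ := clemma hYc (hc.trans_eq hrank.symm)
  obtain ⟨Z₀', hZ₀'⟩ := exists_submodule_rank_eq' K Z hed
  refine ⟨Y ⊔ Z₀'.map Z.subtype, le_sup_left, ?_⟩
  have hZ₀le : Z₀'.map Z.subtype ≤ Z := Submodule.map_subtype_le Z Z₀'
  have hinf : Y ⊓ Z₀'.map Z.subtype = ⊥ :=
    le_bot_iff.1 (le_trans (inf_le_inf_left Y hZ₀le) hZ.inf_eq_bot.le)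
  have := Submodule.rank_sup_add_rank_inf_eq Y (Z₀'.map Z.subtype)
  rw [hinf, rank_bot, add_zero, rank_map_subtype, hZ₀'] at this
  rw [this, hae]

theorem exists_family_homLineability_eq_lineability_eq_succ {K V : Type u} [Field K]
    [AddCommGroup V] [Module K V] (l : Cardinal.{u}) (hl : l ≤ Module.rank K V) :
    ∃ 𝓕 : Set V, homLineabilityNumber K V 𝓕 = Order.succ l ∧
      lineabilityNumber K V 𝓕 = Order.succ l := by
  obtain ⟨s, hs, hsli⟩ := le_rank_iff_exists_linearIndependent.1 hl
  set W : Submodule K V := Submodule.span K s with hWdef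
  have hW : Module.rank K W = l := by rw [hWdef, rank_span_set hsli, hs]
  have hunion : (W : Set V) ∪ {0} = (W : Set V) :=
    Set.union_eq_self_of_subset_right (by simp [Set.singleton_subset_iff, W.zero_mem])
  have hmem : ∀ X : Submodule K V, (X : Set V) ⊆ (W : Set V) ∪ {0} ↔ X ≤ W := fun X => by
    rw [hunion]; exact SetLike.coe_subset_coe
  have hbound : ∀ X : Submodule K V, X ≤ W → Module.rank K X ≤ l := fun X hX =>
    hW ▸ Submodule.rank_mono hX
  have hext : ∀ (Y : Submodule K V), Y ≤ W → ∀ c : Cardinal.{u}, Module.rank K Y ≤ c →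
      c ≤ l → ∃ X : Submodule K V, Y ≤ X ∧ X ≤ W ∧ Module.rank K X = c := by
    intro Y hY c hYc hcl
    have hmc : (Y.comap W.subtype).map W.subtype = Y := by
      rw [Submodule.map_comap_subtype, inf_eq_right.2 hY]
    have hY' : Module.rank K (Y.comap W.subtype) = Module.rank K Y := by
      rw [← rank_map_subtype W (Y.comap W.subtype), hmc]
    obtain ⟨X', hYX', hX'⟩ := ext_lemma (Y.comap W.subtype) (hY'.trans_le hYc)
      (hcl.trans_eq hW.symm)
    refine ⟨X'.map W.subtype, ?_, Submodule.map_subtype_le _ _, by rw [rank_map_subtype, hX']⟩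
    rw [← hmc]
    exact Submodule.map_mono hYX'
  refine ⟨(W : Set V), ?_, ?_⟩
  · -- homogeneous lineability
    apply le_antisymm
    · apply csInf_le'
      refine ⟨⊥, by simp, by rw [rank_bot]; exact (zero_le : (0 : Cardinal.{u}) ≤ l).trans_lt (Order.lt_succ l), ?_⟩
      rintro ⟨X, -, hX, hr⟩
      exact absurd (hr ▸ hbound X ((hmem X).1 hX)) (not_le.2 (Order.lt_succ l))
    · refine le_csInf ⟨Order.succ l, ?_⟩ ?_
      · refine ⟨⊥, by simp, by rw [rank_bot]; exact (zero_le : (0 : Cardinal.{u}) ≤ l).trans_lt (Order.lt_succ l), ?_⟩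
        rintro ⟨X, -, hX, hr⟩
        exact absurd (hr ▸ hbound X ((hmem X).1 hX)) (not_le.2 (Order.lt_succ l))
      · rintro c ⟨Y, hY, hYc, hno⟩
        by_contra h
        push_neg at h
        have hcl : c ≤ l := Order.lt_succ_iff.1 h
        obtain ⟨X, hYX, hXW, hXr⟩ := hext Y ((hmem Y).1 hY) c hYc.le hcl
        exact hno ⟨X, hYX, (hmem X).2 hXW, hXr⟩
  · -- lineability
    apply le_antisymm
    · apply csInf_le'
      rintro ⟨X, hX, hr⟩
      exact absurd (hr ▸ hbound X ((hmem X).1 hX)) (not_le.2 (Order.lt_succ l))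
    · refine le_csInf ⟨Order.succ l, ?_⟩ ?_
      · rintro ⟨X, hX, hr⟩
        exact absurd (hr ▸ hbound X ((hmem X).1 hX)) (not_le.2 (Order.lt_succ l))
      · intro c hc
        by_contra h
        push_neg at h
        have hcl : c ≤ l := Order.lt_succ_iff.1 h
        obtain ⟨X, -, hXW, hXr⟩ := hext ⊥ bot_le c (by rw [rank_bot]; exact zero_le) hcl
        exact hc ⟨X, (hmem X).2 hXW, hXr⟩
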